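/- Let X ~ Bin(m, p) with p ∈ (0,1). For every real u with 0 < u < (1-p)m, every positive integer t, and every integer m' with p·m + u ≤ m' ≤ m, one has P(X = m' + t) ≤ exp(−ut/m)·P(X = m'). -/

import Mathlib

open Finset
open scoped BigOperators Classical

noncomputable section

/-- Probability mass function of a binomial random variable with parameters `m`, `p`. -/
def binomPMF (m : ℕ) (p : ℝ) (j : ℕ) : ℝ :=
  (m.choose j : ℝ) * p ^ j * (1 - p) ^ (m - j)

/-- Probability that independent binomials `X i ~ Bin(m i, p i)` realize an event `A`. -/
def jointPr {M : ℕ} (m : Fin M → ℕ) (p : Fin M → ℝ) (A : (Fin M → ℕ) → Prop) : ℝ :=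
  ∑ ℓ ∈ Fintype.piFinset (fun i => Finset.range (m i + 1)),
    if A ℓ then ∏ i, binomPMF (m i) (p i) (ℓ i) else 0

lemma binomPMF_nonneg (m : ℕ) (p : ℝ) (hp : 0 < p ∧ p < 1) (j : ℕ) :
    0 ≤ binomPMF m p j := by
  unfold binomPMF
  have h1 : 0 ≤ p := hp.1.le
  have h2 : 0 ≤ 1 - p := by linarith [hp.2]
  positivity

lemma step_lemma (m : ℕ) (p : ℝ) (hp : 0 < p ∧ p < 1)
    (u : ℝ) (hu : 0 < u ∧ u < (1 - p) * m) (j : ℕ)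
    (hj : p * m + u ≤ (j : ℝ)) :
    binomPMF m p (j + 1) ≤ Real.exp (-u / m) * binomPMF m p j := by
  have hp0 : 0 < p := hp.1
  have hp1 : 0 < 1 - p := by linarith [hp.2]
  have hu0 : 0 < u := hu.1
  have hm : 0 < (m : ℝ) := by
    by_contra h
    push_neg at h
    nlinarith [hu.1, hu.2]
  by_cases hjm : j + 1 ≤ m
  · -- main case
    have hjm' : j < m := hjm
    have key : (m.choose (j + 1) : ℝ) * (j + 1) = (m.choose j : ℝ) * ((m : ℝ) - j) := by
      have := Nat.choose_succ_right_eq m j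
      have h := congrArg (fun n : ℕ => (n : ℝ)) this
      push_cast [Nat.cast_sub hjm'.le] at h
      linarith [h]
    -- scalar inequality
    have step1 : ((m : ℝ) - j) * p * m ≤ ((1 - p) * m - u) * (p * m) := by
      nlinarith [hj, mul_pos hp0 hm]
    have step3 : ((1 - p) * m - u) * (p * m) ≤ ((m : ℝ) - u) * (1 - p) * (p * m + u) := by
      nlinarith [mul_pos hu0 (sub_pos.2 hu.2), mul_nonneg (mul_nonneg hu0.le hm.le) hp0.le,
        mul_pos hu0 hp1]
    have hmu : 0 < (m : ℝ) - u := by nlinarith [hu.2, mul_pos hp0 hm]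
    have step2 : ((m : ℝ) - u) * (1 - p) * (p * m + u) ≤ ((m : ℝ) - u) * (1 - p) * ((j : ℝ) + 1) := by
      have : p * m + u ≤ (j : ℝ) + 1 := by linarith
      exact mul_le_mul_of_nonneg_left this (by positivity)
    have scalar : ((m : ℝ) - j) * p * m ≤ ((m : ℝ) - u) * (1 - p) * ((j : ℝ) + 1) := by
      linarith
    have hq : 0 ≤ p ^ j * (1 - p) ^ (m - j - 1) := by positivity
    have hc : 0 ≤ (m.choose j : ℝ) := Nat.cast_nonneg _
    set q : ℝ := p ^ j * (1 - p) ^ (m - j - 1) with hqdef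
    set c : ℝ := (m.choose j : ℝ) with hcdef
    have hpow1 : p ^ (j + 1) = p ^ j * p := pow_succ p j
    have hpow2 : (1 - p) ^ (m - j) = (1 - p) ^ (m - j - 1) * (1 - p) := by
      rw [← pow_succ]
      congr 1
      omega
    have hsub : m - (j + 1) = m - j - 1 := by omega
    have hcq : 0 ≤ c * q := mul_nonneg hc hq
    have hmain : binomPMF m p (j + 1) * (((j : ℝ) + 1) * m)
        ≤ ((1 - u / m) * binomPMF m p j) * (((j : ℝ) + 1) * m) := by
      unfold binomPMF
      rw [hsub, hpow1, hpow2]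
      have h1 : (m.choose (j + 1) : ℝ) * (p ^ j * p) * ((1 - p) ^ (m - j - 1))
          * (((j : ℝ) + 1) * m) = (c * q) * ((((m:ℝ) - j)) * p * m) := by
        rw [hqdef, hcdef]
        linear_combination (p ^ j * p * (1 - p) ^ (m - j - 1) * (m : ℝ)) * key
      have h2 : ((1 - u / m) * ((m.choose j : ℝ) * p ^ j * ((1 - p) ^ (m - j - 1) * (1 - p))))
          * (((j : ℝ) + 1) * m) = (c * q) * (((m:ℝ) - u) * (1 - p) * ((j:ℝ) + 1)) := by
        rw [hqdef, hcdef]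
        field_simp
      rw [h1, h2]
      exact mul_le_mul_of_nonneg_left scalar hcq
    have hmain' : binomPMF m p (j + 1) ≤ (1 - u / m) * binomPMF m p j :=
      le_of_mul_le_mul_right hmain (by positivity)
    have hexp : 1 - u / m ≤ Real.exp (-u / m) := by
      rw [neg_div]
      linarith [Real.add_one_le_exp (-(u / m))]
    calc binomPMF m p (j + 1) ≤ (1 - u / m) * binomPMF m p j := hmain'
      _ ≤ Real.exp (-u / m) * binomPMF m p j :=
        mul_le_mul_of_nonneg_right hexp (binomPMF_nonneg m p hp j)
  · -- j + 1 > m : LHS is zero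
    have : m.choose (j + 1) = 0 := Nat.choose_eq_zero_of_lt (by omega)
    have hzero : binomPMF m p (j + 1) = 0 := by
      unfold binomPMF; rw [this]; simp
    rw [hzero]
    exact mul_nonneg (Real.exp_nonneg _) (binomPMF_nonneg m p hp j)

/-- for `X ~ Bin(m,p)`, `0 < u < (1-p)m`, a positive integer `t` and
`m'` with `p·m + u ≤ m' ≤ m`, one has `P(X = m'+t) ≤ exp(−ut/m)·P(X = m')`. -/
theorem stmt13 (m : ℕ) (p : ℝ) (hp : 0 < p ∧ p < 1)
    (u : ℝ) (hu : 0 < u ∧ u < (1 - p) * m)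
    (t : ℕ) (ht : 0 < t) (m' : ℕ)
    (h1 : p * m + u ≤ (m' : ℝ)) (h2 : m' ≤ m) :
    binomPMF m p (m' + t) ≤ Real.exp (-(u * t) / m) * binomPMF m p m' := by
  clear ht h2
  induction t with
  | zero => simp
  | succ t ih =>
    have hj : p * m + u ≤ ((m' + t : ℕ) : ℝ) := by
      push_cast; have : (0:ℝ) ≤ t := Nat.cast_nonneg t; linarith
    have hstep := step_lemma m p hp u hu (m' + t) hj
    have hchain : binomPMF m p (m' + (t + 1)) ≤ Real.exp (-u / m) *
        (Real.exp (-(u * t) / m) * binomPMF m p m') := by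
      calc binomPMF m p (m' + (t + 1)) = binomPMF m p ((m' + t) + 1) := by ring_nf
        _ ≤ Real.exp (-u / m) * binomPMF m p (m' + t) := hstep
        _ ≤ Real.exp (-u / m) * (Real.exp (-(u * t) / m) * binomPMF m p m') :=
          mul_le_mul_of_nonneg_left ih (Real.exp_nonneg _)
    calc binomPMF m p (m' + (t + 1))
        ≤ Real.exp (-u / m) * (Real.exp (-(u * t) / m) * binomPMF m p m') := hchain
      _ = Real.exp (-(u * ((t + 1 : ℕ) : ℝ)) / m) * binomPMF m p m' := by
          rw [← mul_assoc, ← Real.exp_add]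
          push_cast
          ring_nf
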